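/- arXiv:2106.02357 — 5 statements merged into one kernel-verified Lean document; each statement's English description precedes it below -/
import Mathlib

section
/- Let X be a real N × d matrix each of whose columns has ℓ2 norm 1, and assume the Gram matrix XᵀX is invertible. Then for every positive real α with α ≤ 2/(d+1), the matrix series α·∑_{i=0}^{∞} (I − α XᵀX)^i converges and equals (XᵀX)^{−1}. -/
open Matrix Filter Finset

lemma aux_posDef {N d : ℕ} (X : Matrix (Fin N) (Fin d) ℝ)
    (hinv : IsUnit (Xᵀ * X)) : (Xᵀ * X).PosDef := by
  have hconj : Xᴴ = Xᵀ := by ext i j; simp [conjTranspose_apply]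
  have hPSD : (Xᵀ * X).PosSemidef := hconj ▸ posSemidef_conjTranspose_mul_self X
  refine PosDef.of_dotProduct_mulVec_pos hPSD.1 fun x hx => ?_
  have h0 : X *ᵥ x ≠ 0 := by
    intro h
    apply hx
    have h1 : (Xᵀ * X) *ᵥ x = 0 := by rw [← mulVec_mulVec, h, mulVec_zero]
    have h2 : (Xᵀ * X) *ᵥ (0 : Fin d → ℝ) = 0 := mulVec_zero _
    exact (Matrix.mulVec_injective_iff_isUnit.mpr hinv) (h1.trans h2.symm)
  have key : dotProduct (star x) ((Xᵀ * X) *ᵥ x) = dotProduct (X *ᵥ x) (X *ᵥ x) := by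
    rw [show star x = x from funext fun i => star_trivial _, ← mulVec_mulVec,
      dotProduct_mulVec, vecMul_transpose]
  rw [key]
  have := (dotProduct_self_star_pos_iff (v := X *ᵥ x)).mpr h0
  simpa [show star (X *ᵥ x) = X *ᵥ x from funext fun i => star_trivial _] using this

/-- For an `N × d` real matrix `X` with `ℓ2`-normalized columns and invertible
Gram matrix `XᵀX`, for every positive `α ≤ 2/(d+1)` the series
`α • ∑_{i=0}^{∞} (I - α XᵀX)^i` converges to `(XᵀX)⁻¹`. -/
theorem gram_inverse_neumann_series (N d : ℕ) (X : Matrix (Fin N) (Fin d) ℝ)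
    (hcol : ∀ j : Fin d, ∑ i : Fin N, (X i j) ^ 2 = 1)
    (hinv : IsUnit (Xᵀ * X))
    (α : ℝ) (hα : 0 < α) (hα' : α ≤ 2 / ((d : ℝ) + 1)) :
    Tendsto
      (fun n : ℕ => α • ∑ i ∈ Finset.range (n + 1), ((1 : Matrix (Fin d) (Fin d) ℝ) - α • (Xᵀ * X)) ^ i)
      atTop (nhds ((Xᵀ * X)⁻¹)) := by
  set G : Matrix (Fin d) (Fin d) ℝ := Xᵀ * X with hGdef
  have hPD : G.PosDef := aux_posDef X hinv
  have hG : G.IsHermitian := hPD.1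
  set U : Matrix (Fin d) (Fin d) ℝ := (hG.eigenvectorUnitary : Matrix (Fin d) (Fin d) ℝ) with hU
  set lam : Fin d → ℝ := hG.eigenvalues with hlam
  have hUU : U * star U = 1 := (Matrix.mem_unitaryGroup_iff).mp hG.eigenvectorUnitary.2
  have hUU' : star U * U = 1 := (Matrix.mem_unitaryGroup_iff').mp hG.eigenvectorUnitary.2
  have hspec : G = U * diagonal lam * star U := by
    have := hG.spectral_theorem
    simpa using this
  -- trace of G is d
  have htrace : ∑ i, lam i = (d : ℝ) := by
    have h1 : G.trace = ∑ i, lam i := by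
      rw [hspec, Matrix.trace_mul_cycle, hUU', one_mul, Matrix.trace_diagonal]
    have h2 : G.trace = (d : ℝ) := by
      have : ∀ j, G j j = 1 := by
        intro j
        have := hcol j
        simpa [hGdef, Matrix.mul_apply, pow_two] using this
      simp [Matrix.trace, Matrix.diag, this]
    rw [← h1, h2]
  have hlam_pos : ∀ i, 0 < lam i := hPD.eigenvalues_pos
  have hlam_le : ∀ i, lam i ≤ (d : ℝ) := by
    intro i
    rw [← htrace]
    exact Finset.single_le_sum (fun j _ => (hlam_pos j).le) (Finset.mem_univ i)
  -- eigenvalue bound for 1 - α λ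
  have hc : ∀ i, |1 - α * lam i| < 1 := by
    intro i
    rw [abs_lt]
    constructor
    · have hd1 : (0:ℝ) < (d:ℝ) + 1 := by positivity
      have : α * lam i ≤ (2 / ((d:ℝ)+1)) * (d:ℝ) :=
        mul_le_mul hα' (hlam_le i) (hlam_pos i).le (by positivity)
      have hlt : (2 / ((d:ℝ)+1)) * (d:ℝ) < 2 := by
        rw [div_mul_eq_mul_div, div_lt_iff₀ hd1]
        nlinarith
      linarith
    · nlinarith [mul_pos hα (hlam_pos i)]
  set c : Fin d → ℝ := fun i => 1 - α * lam i with hcdef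
  set M : Matrix (Fin d) (Fin d) ℝ := 1 - α • G with hM
  have hMspec : M = U * diagonal c * star U := by
    have h1 : (1 : Matrix (Fin d) (Fin d) ℝ) = U * 1 * star U := by
      rw [mul_one, hUU]
    rw [hM]
    calc (1:Matrix (Fin d) (Fin d) ℝ) - α • G
        = U * 1 * star U - α • (U * diagonal lam * star U) := by rw [← h1, ← hspec]
      _ = U * (1 - α • diagonal lam) * star U := by
          simp only [Matrix.mul_sub, Matrix.sub_mul, mul_smul_comm, smul_mul_assoc]
      _ = U * diagonal c * star U := by
          congr 1
          congr 1
          ext i j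
          rcases eq_or_ne i j with h | h
          · subst h; simp [hcdef, Matrix.diagonal_apply_eq, Matrix.one_apply_eq]
          · simp [Matrix.diagonal_apply_ne _ h, Matrix.one_apply_ne h]
  have hMpow : ∀ n : ℕ, M ^ n = U * diagonal (fun i => c i ^ n) * star U := by
    intro n
    induction n with
    | zero => simp [Matrix.diagonal_one, hUU]
    | succ n ih =>
        rw [pow_succ, ih, hMspec]
        have : (fun i => c i ^ (n+1)) = fun i => c i ^ n * c i := by
          funext i; rw [pow_succ]
        rw [this, ← Matrix.diagonal_mul_diagonal]
        simp only [Matrix.mul_assoc]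
        rw [← Matrix.mul_assoc (star U) U, hUU', Matrix.one_mul]
  -- powers of M tend to 0
  have hMtend : Tendsto (fun n : ℕ => M ^ n) atTop (nhds 0) := by
    have hD : Tendsto (fun n : ℕ => diagonal (fun i => c i ^ n)) atTop
        (nhds (0 : Matrix (Fin d) (Fin d) ℝ)) := by
      rw [show (0 : Matrix (Fin d) (Fin d) ℝ) = diagonal (fun _ => 0) by simp]
      refine tendsto_pi_nhds.mpr fun i => tendsto_pi_nhds.mpr fun j => ?_
      by_cases h : i = j
      · subst h
        simpa [Matrix.diagonal_apply_eq] using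
          tendsto_pow_atTop_nhds_zero_of_abs_lt_one (hc i)
      · simpa [Matrix.diagonal_apply_ne _ h] using tendsto_const_nhds
    have := (tendsto_const_nhds (x := U)).mul hD |>.mul (tendsto_const_nhds (x := star U))
    simp only [mul_zero, zero_mul] at this
    convert this using 1
    funext n
    exact hMpow n
  -- telescoping identity
  have hinvdet : IsUnit G.det := (Matrix.isUnit_iff_isUnit_det G).mp hinv
  have hGinv : G⁻¹ * G = 1 := Matrix.nonsing_inv_mul G hinvdet
  have hkey : ∀ n : ℕ, α • ∑ i ∈ Finset.range (n + 1), M ^ i = G⁻¹ - G⁻¹ * M ^ (n+1) := by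
    intro n
    have hgeom : (1 - M) * ∑ i ∈ Finset.range (n + 1), M ^ i = 1 - M ^ (n+1) :=
      mul_neg_geom_sum M (n+1)
    have h1M : (1 : Matrix (Fin d) (Fin d) ℝ) - M = α • G := by rw [hM]; abel
    rw [h1M, smul_mul_assoc] at hgeom
    have := congrArg (fun A => G⁻¹ * A) hgeom
    simp only [Matrix.mul_sub, Matrix.mul_one, mul_smul_comm, ← Matrix.mul_assoc, hGinv,
      Matrix.one_mul] at this
    exact this
  have : Tendsto (fun n : ℕ => G⁻¹ - G⁻¹ * M ^ (n+1)) atTop (nhds (G⁻¹)) := by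
    have h2 : Tendsto (fun n : ℕ => M ^ (n+1)) atTop (nhds 0) :=
      hMtend.comp (tendsto_add_atTop_nat 1)
    have h3 := (tendsto_const_nhds (x := G⁻¹)).mul h2
    simp only [mul_zero] at h3
    have := (tendsto_const_nhds (x := G⁻¹)).sub h3
    simpa using this
  convert this using 1
  funext n
  exact hkey n
end

section
/- Let X be a real N × d matrix each of whose columns has ℓ2 norm 1, with XᵀX invertible, let α be a positive real with α ≤ 2/(d+1), and set B = I − α·XᵀX. Then every eigenvalue of B lies in the open interval (−1, 1). -/
open Matrix Filter Finset

/-- If each column of `X` is `ℓ2`-normalized, `XᵀX` is invertible,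
`0 < α ≤ 2/(d+1)` and `B = I - α • XᵀX`, then every eigenvalue of `B` lies in
the open interval `(-1, 1)`. -/
theorem eigenvalues_one_sub_smul_gram_mem_Ioo (N d : ℕ) (X : Matrix (Fin N) (Fin d) ℝ)
    (hcol : ∀ j : Fin d, ∑ i : Fin N, (X i j) ^ 2 = 1)
    (hinv : IsUnit (Xᵀ * X))
    (α : ℝ) (hα : 0 < α) (hα' : α ≤ 2 / ((d : ℝ) + 1))
    (B : Matrix (Fin d) (Fin d) ℝ)
    (hB : B = (1 : Matrix (Fin d) (Fin d) ℝ) - α • (Xᵀ * X))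
    (μ : ℝ) (v : Fin d → ℝ) (hv : v ≠ 0)
    (hμ : B.mulVec v = μ • v) :
    -1 < μ ∧ μ < 1 := by
  set G := Xᵀ * X with hG
  set w := X.mulVec v with hw
  set S := ∑ j, v j ^ 2 with hS
  set Q := ∑ i, w i ^ 2 with hQ
  have hS0 : 0 < S := by
    rcases Function.ne_iff.mp hv with ⟨j, hj⟩
    exact Finset.sum_pos' (fun i _ => sq_nonneg _)
      ⟨j, Finset.mem_univ j, by have hj' : v j ≠ 0 := hj; positivity⟩
  have hkey : α • G.mulVec v = (1 - μ) • v := by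
    rw [hB, sub_mulVec, one_mulVec, smul_mulVec] at hμ
    funext i
    have h := congrFun hμ i
    simp only [Pi.sub_apply, Pi.smul_apply, smul_eq_mul] at h ⊢
    linarith
  have hquad : v ⬝ᵥ G.mulVec v = Q := by
    rw [hG, ← Matrix.mulVec_mulVec, Matrix.dotProduct_mulVec, Matrix.vecMul_transpose]
    simp [hQ, dotProduct, sq, hw]
  have hmain : α * Q = (1 - μ) * S := by
    have h := congrArg (fun u => v ⬝ᵥ u) hkey
    simp only [dotProduct_smul, smul_eq_mul] at h
    rw [hquad] at h
    rw [h]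
    congr 1
    simp [dotProduct, hS, sq]
  have hQ0 : 0 < Q := by
    rcases (Finset.sum_nonneg fun i (_ : i ∈ Finset.univ) => sq_nonneg (w i)).lt_or_eq
      with h | h
    · exact h
    · exfalso
      have hw0 : w = 0 := by
        funext i
        have h2 := (Finset.sum_eq_zero_iff_of_nonneg
          (fun i _ => sq_nonneg (w i))).mp h.symm i (Finset.mem_univ i)
        exact pow_eq_zero_iff (two_ne_zero) |>.mp h2
      have hGv : G.mulVec v = 0 := by
        rw [hG, ← Matrix.mulVec_mulVec, ← hw, hw0, Matrix.mulVec_zero]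
      have hdet : IsUnit G.det := (Matrix.isUnit_iff_isUnit_det G).mp hinv
      have hv0 : v = 0 := by
        have h3 := congrArg (fun u => G⁻¹.mulVec u) hGv
        simpa [Matrix.mulVec_mulVec, Matrix.nonsing_inv_mul G hdet] using h3
      exact hv hv0
  -- Q ≤ d * S by Cauchy–Schwarz rowwise
  have hQle : Q ≤ d * S := by
    have h1 : ∀ i : Fin N, w i ^ 2 ≤ (∑ j, X i j ^ 2) * S := by
      intro i
      have := Finset.sum_mul_sq_le_sq_mul_sq Finset.univ (fun j => X i j) v
      simpa [hw, Matrix.mulVec, dotProduct, hS, sq] using this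
    calc Q ≤ ∑ i, (∑ j, X i j ^ 2) * S := Finset.sum_le_sum fun i _ => h1 i
      _ = (∑ i, ∑ j : Fin d, X i j ^ 2) * S := by rw [Finset.sum_mul]
      _ = (∑ j : Fin d, ∑ i, X i j ^ 2) * S := by rw [Finset.sum_comm]
      _ = d * S := by simp [hcol]
  have hd1 : (0:ℝ) < (d : ℝ) + 1 := by positivity
  have hαd : α * ((d:ℝ) + 1) ≤ 2 := (le_div_iff₀ hd1).mp hα'
  have h1 : 0 < (1 - μ) * S := hmain ▸ mul_pos hα hQ0
  constructor
  · have h2 : (1 - μ) * S ≤ α * ((d:ℝ) * S) := by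
      rw [← hmain]; exact mul_le_mul_of_nonneg_left hQle hα.le
    nlinarith [mul_pos hα hS0]
  · nlinarith
end

section
/- Let X be a real N × d matrix each of whose columns has ℓ2 norm 1, with XᵀX invertible, let α be a positive real with α ≤ 2/(d+1), and set B = I − α·XᵀX. Then the matrix powers Bⁿ converge to the zero matrix as n → ∞. -/
open Matrix Filter Finset

lemma isUnit_smul_matrix_iff {d : ℕ} (c : ℝ) (hc : c ≠ 0) (M : Matrix (Fin d) (Fin d) ℝ) :
    IsUnit (c • M) ↔ IsUnit M := by
  rw [Matrix.isUnit_iff_isUnit_det, Matrix.isUnit_iff_isUnit_det, Matrix.det_smul]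
  simp [isUnit_iff_ne_zero, pow_ne_zero, hc]

lemma trace_eq_sum_eigs {d : ℕ} {A : Matrix (Fin d) (Fin d) ℝ} (hA : A.IsHermitian) :
    A.trace = ∑ i, hA.eigenvalues i := by
  conv_lhs => rw [hA.spectral_theorem, Unitary.conjStarAlgAut_apply]
  rw [Matrix.trace_mul_cycle, Unitary.coe_star_mul_self, Matrix.one_mul, Matrix.trace_diagonal]
  simp [RCLike.ofReal_real_eq_id]

/-- If each column of `X` is `ℓ2`-normalized, `XᵀX` is invertible,
`0 < α ≤ 2/(d+1)` and `B = I - α • XᵀX`, then `Bⁿ → 0` as `n → ∞`. -/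
theorem pow_one_sub_smul_gram_tendsto_zero (N d : ℕ) (X : Matrix (Fin N) (Fin d) ℝ)
    (hcol : ∀ j : Fin d, ∑ i : Fin N, (X i j) ^ 2 = 1)
    (hinv : IsUnit (Xᵀ * X))
    (α : ℝ) (hα : 0 < α) (hα' : α ≤ 2 / ((d : ℝ) + 1))
    (B : Matrix (Fin d) (Fin d) ℝ)
    (hB : B = (1 : Matrix (Fin d) (Fin d) ℝ) - α • (Xᵀ * X)) :
    Tendsto (fun n : ℕ => B ^ n) atTop (nhds (0 : Matrix (Fin d) (Fin d) ℝ)) := by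
  set G : Matrix (Fin d) (Fin d) ℝ := Xᵀ * X with hGdef
  have hXH : Xᴴ = Xᵀ := Matrix.conjTranspose_eq_transpose_of_trivial X
  have hGpsd : G.PosSemidef := by
    rw [hGdef, ← hXH]; exact Matrix.posSemidef_conjTranspose_mul_self X
  have hG : G.IsHermitian := hGpsd.isHermitian
  -- trace of G is d
  have htr : G.trace = (d : ℝ) := by
    simp only [Matrix.trace, Matrix.diag, hGdef, Matrix.mul_apply, Matrix.transpose_apply]
    have : ∀ j : Fin d, ∑ i : Fin N, X i j * X i j = 1 := by
      intro j; simpa [sq] using hcol j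
    simp [this]
  have hsum : ∑ i, hG.eigenvalues i = (d : ℝ) := by rw [← trace_eq_sum_eigs hG, htr]
  have heigpos : ∀ i, 0 < hG.eigenvalues i := by
    intro i
    rcases lt_or_eq_of_le (hGpsd.eigenvalues_nonneg i) with h | h
    · exact h
    · exfalso
      have hdet : IsUnit G.det := (Matrix.isUnit_iff_isUnit_det G).mp hinv
      rw [hG.det_eq_prod_eigenvalues] at hdet
      have : (hG.eigenvalues i : ℝ) = 0 := h.symm
      simp only [isUnit_iff_ne_zero] at hdet
      exact hdet (Finset.prod_eq_zero (Finset.mem_univ i) (by exact_mod_cast this))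
  have heigle : ∀ i, hG.eigenvalues i ≤ (d : ℝ) := by
    intro i
    rw [← hsum]
    exact Finset.single_le_sum (fun j _ => (heigpos j).le) (Finset.mem_univ i)
  -- B is Hermitian
  have hBH : B.IsHermitian := by
    rw [hB]
    refine Matrix.isHermitian_one.sub ?_
    show (α • G)ᴴ = α • G
    rw [Matrix.conjTranspose_smul, hG.eq, star_trivial]
  set t : Fin d → ℝ := hBH.eigenvalues with ht
  -- each eigenvalue of B has absolute value < 1
  have habs : ∀ i, |t i| < 1 := by
    intro i
    have hmem : t i ∈ spectrum ℝ B := hBH.eigenvalues_mem_spectrum_real i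
    rw [spectrum.mem_iff] at hmem
    set μ : ℝ := (1 - t i) / α with hμ
    have hαμ : α * μ = 1 - t i := by have := hα.ne'; rw [hμ]; field_simp
    have hkey : algebraMap ℝ (Matrix (Fin d) (Fin d) ℝ) (t i) - B
        = (-α) • (algebraMap ℝ (Matrix (Fin d) (Fin d) ℝ) μ - G) := by
      rw [hB, Algebra.algebraMap_eq_smul_one, Algebra.algebraMap_eq_smul_one]
      rw [smul_sub, smul_smul]
      rw [show -α * μ = t i - 1 by rw [neg_mul, hαμ]; ring]
      module
    rw [hkey] at hmem
    have hμmem : μ ∈ spectrum ℝ G := by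
      rw [spectrum.mem_iff]
      intro hu
      exact hmem ((isUnit_smul_matrix_iff (-α) (by linarith) _).mpr hu)
    rw [hG.spectrum_real_eq_range_eigenvalues] at hμmem
    obtain ⟨j, hj⟩ := hμmem
    have h1 : 0 < μ := hj ▸ heigpos j
    have h2 : μ ≤ (d : ℝ) := hj ▸ heigle j
    have hd1 : (0:ℝ) < (d : ℝ) + 1 := by positivity
    have hαd : α * μ < 2 := by
      calc α * μ ≤ (2 / ((d : ℝ) + 1)) * μ := by
            apply mul_le_mul_of_nonneg_right hα' h1.le
        _ ≤ (2 / ((d : ℝ) + 1)) * (d : ℝ) := by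
            apply mul_le_mul_of_nonneg_left h2 (by positivity)
        _ < 2 := by
            rw [div_mul_eq_mul_div, div_lt_iff₀ hd1]
            nlinarith
    have haμpos : 0 < α * μ := mul_pos hα h1
    rw [abs_lt]
    constructor <;> nlinarith [hαμ]
  -- spectral decomposition of B and its powers
  set U : Matrix (Fin d) (Fin d) ℝ := (hBH.eigenvectorUnitary : Matrix (Fin d) (Fin d) ℝ)
    with hU
  have hUU : U * star U = 1 := (Matrix.mem_unitaryGroup_iff).mp hBH.eigenvectorUnitary.2
  have hUU' : star U * U = 1 := Unitary.coe_star_mul_self hBH.eigenvectorUnitary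
  have hBspec : B = U * Matrix.diagonal t * star U := by
    conv_lhs => rw [hBH.spectral_theorem]
    simp [RCLike.ofReal_real_eq_id]
    rfl
  have key : ∀ n : ℕ, B ^ n = U * Matrix.diagonal (fun i => t i ^ n) * star U := by
    intro n
    induction n with
    | zero =>
      simp only [pow_zero]
      have hdiag : (Matrix.diagonal (fun _ : Fin d => (1:ℝ))) = (1 : Matrix (Fin d) (Fin d) ℝ) :=
        Matrix.diagonal_one
      rw [hdiag, Matrix.mul_one, hUU]
    | succ n ih =>
      rw [pow_succ, ih, hBspec]
      simp only [Matrix.mul_assoc]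
      rw [← Matrix.mul_assoc (star U) U, hUU', Matrix.one_mul,
        ← Matrix.mul_assoc (Matrix.diagonal fun i => t i ^ n) (Matrix.diagonal t),
        Matrix.diagonal_mul_diagonal]
      have hfun : (fun i => t i ^ n * t i) = fun i => t i ^ (n + 1) := by
        funext i; rw [pow_succ]
      rw [hfun]
  -- the diagonal powers tend to zero
  have hD : Tendsto (fun n : ℕ => Matrix.diagonal (fun i => t i ^ n)) atTop
      (nhds (0 : Matrix (Fin d) (Fin d) ℝ)) := by
    refine tendsto_pi_nhds.mpr ?_
    intro i
    rw [tendsto_pi_nhds]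
    intro j
    by_cases hij : i = j
    · subst hij
      simpa [Matrix.diagonal_apply_eq] using
        tendsto_pow_atTop_nhds_zero_of_abs_lt_one (habs i)
    · simpa [Matrix.diagonal_apply_ne _ hij] using tendsto_const_nhds (x := (0:ℝ))
  have hcont : Continuous (fun M : Matrix (Fin d) (Fin d) ℝ => U * M * star U) :=
    (continuous_const.matrix_mul continuous_id).matrix_mul continuous_const
  have : Tendsto (fun n : ℕ => U * Matrix.diagonal (fun i => t i ^ n) * star U) atTop
      (nhds (0 : Matrix (Fin d) (Fin d) ℝ)) := by
    have := (hcont.tendsto' 0 0 (by simp)).comp hD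
    exact this
  simpa [funext key] using this
end

section
/- Let X be a real N × d matrix each of whose columns has ℓ2 norm 1, with XᵀX invertible, let α be a positive real with α ≤ 2/(d+1), and set B = I − α·XᵀX. Then I − B is invertible, the series ∑_{i=0}^{∞} Bⁱ converges, and (I − B)^{−1} = ∑_{i=0}^{∞} Bⁱ. -/
open Matrix Filter Finset

/-- If each column of `X` is `ℓ2`-normalized, `XᵀX` is invertible,
`0 < α ≤ 2/(d+1)` and `B = I - α • XᵀX`, then `I - B` is invertible, the series
`∑_{i=0}^{∞} Bⁱ` converges, and `(I - B)⁻¹ = ∑_{i=0}^{∞} Bⁱ`. -/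
theorem geom_series_one_sub_smul_gram (N d : ℕ) (X : Matrix (Fin N) (Fin d) ℝ)
    (hcol : ∀ j : Fin d, ∑ i : Fin N, (X i j) ^ 2 = 1)
    (hinv : IsUnit (Xᵀ * X))
    (α : ℝ) (hα : 0 < α) (hα' : α ≤ 2 / ((d : ℝ) + 1))
    (B : Matrix (Fin d) (Fin d) ℝ)
    (hB : B = (1 : Matrix (Fin d) (Fin d) ℝ) - α • (Xᵀ * X)) :
    IsUnit ((1 : Matrix (Fin d) (Fin d) ℝ) - B) ∧
      Tendsto (fun n : ℕ => ∑ i ∈ Finset.range (n + 1), B ^ i) atTop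
        (nhds (((1 : Matrix (Fin d) (Fin d) ℝ) - B)⁻¹)) := by
  classical
  set G : Matrix (Fin d) (Fin d) ℝ := Xᵀ * X with hGdef
  have hG : G.IsHermitian := by
    have := Matrix.isHermitian_conjTranspose_mul_self X
    rwa [Matrix.conjTranspose_eq_transpose_of_trivial] at this
  set lam : Fin d → ℝ := hG.eigenvalues with hlam
  set U : Matrix (Fin d) (Fin d) ℝ := (hG.eigenvectorUnitary : Matrix (Fin d) (Fin d) ℝ)
    with hUdef
  have hU1 : U * star U = 1 := (Matrix.mem_unitaryGroup_iff).mp hG.eigenvectorUnitary.2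
  have hU2 : star U * U = 1 := (Matrix.mem_unitaryGroup_iff').mp hG.eigenvectorUnitary.2
  have hspec : G = U * Matrix.diagonal lam * star U := by
    have := hG.spectral_theorem
    simpa using this
  -- eigenvalues are nonnegative
  have hpsd : G.PosSemidef := by
    have := Matrix.posSemidef_conjTranspose_mul_self X
    rwa [Matrix.conjTranspose_eq_transpose_of_trivial] at this
  have hnn : ∀ i, 0 ≤ lam i := fun i => hpsd.eigenvalues_nonneg i
  -- eigenvalues are positive
  have hdetne : G.det ≠ 0 := ((Matrix.isUnit_iff_isUnit_det G).mp hinv).ne_zero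
  have hdet : G.det = ∏ i, lam i := by simpa using hG.det_eq_prod_eigenvalues
  have hpos : ∀ i, 0 < lam i := by
    intro i
    rcases (hnn i).lt_or_eq with h | h
    · exact h
    · exact absurd (by rw [hdet]; exact Finset.prod_eq_zero (Finset.mem_univ i) h.symm) hdetne
  -- sum of eigenvalues equals trace = d
  have htrace : G.trace = (d : ℝ) := by
    have : G.trace = ∑ j : Fin d, ∑ i : Fin N, X i j * X i j := by
      simp [Matrix.trace, Matrix.diag, hGdef, Matrix.mul_apply, Matrix.transpose_apply]
    rw [this]
    have : ∀ j : Fin d, ∑ i : Fin N, X i j * X i j = 1 := by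
      intro j; simpa [pow_two] using hcol j
    simp [this]
  have htr2 : G.trace = ∑ i, lam i := by
    conv_lhs => rw [hspec]
    rw [Matrix.trace_mul_cycle, hU2, one_mul, Matrix.trace_diagonal]
  have hsumlam : ∑ i, lam i = (d : ℝ) := by rw [← htr2, htrace]
  have hle : ∀ i, lam i ≤ (d : ℝ) := by
    intro i
    rw [← hsumlam]
    exact Finset.single_le_sum (fun j _ => hnn j) (Finset.mem_univ i)
  -- α * lam i < 2
  have hαd : α * ((d : ℝ) + 1) ≤ 2 := by
    have hd1 : (0 : ℝ) < (d : ℝ) + 1 := by positivity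
    calc α * ((d : ℝ) + 1) ≤ (2 / ((d : ℝ) + 1)) * ((d : ℝ) + 1) := by
          exact mul_le_mul_of_nonneg_right hα' hd1.le
      _ = 2 := by field_simp
  have habs : ∀ i, |1 - α * lam i| < 1 := by
    intro i
    have h1 : 0 < α * lam i := mul_pos hα (hpos i)
    have h2 : α * lam i < 2 := by nlinarith [hle i, hpos i]
    rw [abs_lt]; constructor <;> nlinarith
  -- conjugation lemma
  have key : ∀ P Q : Matrix (Fin d) (Fin d) ℝ,
      (U * P * star U) * (U * Q * star U) = U * (P * Q) * star U := by
    intro P Q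
    simp only [Matrix.mul_assoc]
    rw [← Matrix.mul_assoc (star U) U, hU2, one_mul]
  -- diagonalization of B
  have hd : Matrix.diagonal (fun i => 1 - α * lam i)
      = (1 : Matrix (Fin d) (Fin d) ℝ) - α • Matrix.diagonal lam := by
    ext i j
    by_cases h : i = j <;>
      simp [Matrix.diagonal_apply, Matrix.one_apply, Matrix.smul_apply, h]
  have hBspec : B = U * Matrix.diagonal (fun i => 1 - α * lam i) * star U := by
    rw [hB, hd, hspec]
    simp only [Matrix.mul_sub, Matrix.sub_mul, Matrix.mul_one, Matrix.mul_smul,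
      Matrix.smul_mul, hU1]
  -- powers of B
  have hpow : ∀ n : ℕ, B ^ n
      = U * Matrix.diagonal (fun i => (1 - α * lam i) ^ n) * star U := by
    intro n
    induction n with
    | zero => simp [hU1]
    | succ n ih =>
      have hdm : Matrix.diagonal (fun i => (1 - α * lam i) ^ n)
          * Matrix.diagonal (fun i => 1 - α * lam i)
          = Matrix.diagonal (fun i => (1 - α * lam i) ^ (n + 1)) := by
        ext a b
        by_cases h : a = b <;> simp [Matrix.diagonal_apply, h, pow_succ]
      rw [pow_succ, ih, hBspec, key, hdm]
  -- partial sums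
  have hdsum : ∀ n : ℕ, ∑ i ∈ Finset.range (n + 1),
      Matrix.diagonal (fun j => (1 - α * lam j) ^ i)
      = Matrix.diagonal (fun j => ∑ i ∈ Finset.range (n + 1), (1 - α * lam j) ^ i) := by
    intro n
    ext a b
    by_cases h : a = b <;> simp [Matrix.sum_apply, Matrix.diagonal_apply, h]
  have hsum : ∀ n : ℕ, ∑ i ∈ Finset.range (n + 1), B ^ i
      = U * Matrix.diagonal (fun j => ∑ i ∈ Finset.range (n + 1), (1 - α * lam j) ^ i)
        * star U := by
    intro n
    calc ∑ i ∈ Finset.range (n + 1), B ^ i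
        = ∑ i ∈ Finset.range (n + 1),
            U * Matrix.diagonal (fun j => (1 - α * lam j) ^ i) * star U := by
          exact Finset.sum_congr rfl fun i _ => hpow i
      _ = (U * ∑ i ∈ Finset.range (n + 1),
            Matrix.diagonal (fun j => (1 - α * lam j) ^ i)) * star U := by
          rw [← Finset.sum_mul, Finset.mul_sum]
      _ = _ := by rw [hdsum]
  -- 1 - B = α • G and it is a unit
  have h1B : (1 : Matrix (Fin d) (Fin d) ℝ) - B = α • G := by
    rw [hB]; exact sub_sub_cancel _ _
  have hunit : IsUnit ((1 : Matrix (Fin d) (Fin d) ℝ) - B) := by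
    rw [h1B, Matrix.isUnit_iff_isUnit_det, Matrix.det_smul, isUnit_iff_ne_zero]
    exact mul_ne_zero (pow_ne_zero _ hα.ne') hdetne
  refine ⟨hunit, ?_⟩
  -- the inverse
  have hinv_eq : ((1 : Matrix (Fin d) (Fin d) ℝ) - B)⁻¹
      = U * Matrix.diagonal (fun j => (α * lam j)⁻¹) * star U := by
    apply Matrix.inv_eq_right_inv
    have hone : α • (Matrix.diagonal lam * Matrix.diagonal fun j => (α * lam j)⁻¹)
        = (1 : Matrix (Fin d) (Fin d) ℝ) := by
      ext a b
      have hne : α * lam a ≠ 0 := (mul_pos hα (hpos a)).ne'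
      by_cases h : a = b
      · subst h
        simp only [Matrix.smul_apply, Matrix.diagonal_mul_diagonal,
          Matrix.diagonal_apply_eq, Matrix.one_apply_eq, Pi.mul_apply, smul_eq_mul]
        field_simp
        exact div_self (hpos a).ne'
      · simp [Matrix.diagonal_mul_diagonal, Matrix.diagonal_apply_ne _ h,
          Matrix.one_apply_ne h]
    calc ((1 : Matrix (Fin d) (Fin d) ℝ) - B)
          * (U * Matrix.diagonal (fun j => (α * lam j)⁻¹) * star U)
        = α • (G * (U * Matrix.diagonal (fun j => (α * lam j)⁻¹) * star U)) := by
          rw [h1B, Matrix.smul_mul]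
      _ = α • (U * (Matrix.diagonal lam * Matrix.diagonal fun j => (α * lam j)⁻¹)
            * star U) := by rw [hspec, key]
      _ = U * (α • (Matrix.diagonal lam * Matrix.diagonal fun j => (α * lam j)⁻¹))
            * star U := by rw [Matrix.mul_smul, Matrix.smul_mul]
      _ = 1 := by rw [hone, mul_one, hU1]
  -- convergence
  have hcont : Continuous fun v : Fin d → ℝ => U * Matrix.diagonal v * star U :=
    (continuous_const.matrix_mul continuous_id.matrix_diagonal).matrix_mul continuous_const
  have hgeo : Tendsto
      (fun n : ℕ => fun j : Fin d => ∑ i ∈ Finset.range (n + 1), (1 - α * lam j) ^ i)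
      atTop (nhds fun j : Fin d => (α * lam j)⁻¹) := by
    rw [tendsto_pi_nhds]
    intro j
    have h := (hasSum_geometric_of_abs_lt_one (habs j)).tendsto_sum_nat
    have h2 : (1 - (1 - α * lam j))⁻¹ = (α * lam j)⁻¹ := by ring_nf
    rw [h2] at h
    exact h.comp (tendsto_add_atTop_nat 1)
  have hfinal := (hcont.tendsto (fun j : Fin d => (α * lam j)⁻¹)).comp hgeo
  simp only [hsum, hinv_eq]
  exact hfinal
end

section
/- Let X be a real N × d matrix with d columns of which a subset of d′ columns is retained to form the N × d′ submatrix X′; assume each column of X has ℓ2 norm 1 and that X′ᵀX′ is invertible. Then for every positive real α with α ≤ 2/(d+1), the series α·∑_{i=0}^{∞} (I − α X′ᵀX′)^i converges and equals (X′ᵀX′)^{−1}. -/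
open Matrix Filter Finset

lemma conj_pow_tendsto_zero {n : Type*} [Fintype n] [DecidableEq n]
    (U : Matrix n n ℝ) (hU : star U * U = 1) (μ : n → ℝ) (hμ : ∀ i, |μ i| < 1) :
    Tendsto (fun k : ℕ => (U * Matrix.diagonal μ * star U) ^ k) atTop
      (nhds 0) := by
  have hpow : ∀ k : ℕ, k ≠ 0 → (U * Matrix.diagonal μ * star U) ^ k
      = U * Matrix.diagonal (fun i => μ i ^ k) * star U := by
    intro k hk
    induction k with
    | zero => simp at hk
    | succ m ih =>
      rcases Nat.eq_zero_or_pos m with hm | hm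
      · subst hm; simp [Matrix.diagonal_pow]
      · rw [pow_succ, ih hm.ne']
        have : (fun i => μ i ^ m) = μ ^ m := by funext i; simp
        calc U * Matrix.diagonal (fun i => μ i ^ m) * star U * (U * Matrix.diagonal μ * star U)
            = U * (Matrix.diagonal (fun i => μ i ^ m) * (star U * U) * Matrix.diagonal μ) * star U := by
              simp only [Matrix.mul_assoc]
          _ = U * Matrix.diagonal (fun i => μ i ^ (m + 1)) * star U := by
              rw [hU, Matrix.mul_one, Matrix.diagonal_mul_diagonal]
              simp [pow_succ, Matrix.mul_assoc]
      
  have hD : Tendsto (fun k : ℕ => Matrix.diagonal (fun i => μ i ^ k)) atTop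
      (nhds (0 : Matrix n n ℝ)) := by
    refine tendsto_pi_nhds.mpr ?_
    intro i
    rw [tendsto_pi_nhds]
    intro j
    by_cases hij : i = j
    · subst hij
      simpa [Matrix.diagonal] using
        tendsto_pow_atTop_nhds_zero_of_abs_lt_one (hμ i)
    · simpa [Matrix.diagonal, hij] using tendsto_const_nhds (x := (0:ℝ))
  have : Tendsto (fun k : ℕ => U * Matrix.diagonal (fun i => μ i ^ k) * star U) atTop
      (nhds 0) := by
    have := (hD.const_mul U).mul_const (star U)
    simpa using this
  refine this.congr' ?_
  filter_upwards [eventually_ne_atTop 0] with k hk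
  exact (hpow k hk).symm

/-- Let `X'` be the `N × d'` submatrix of `X` obtained by retaining an injectively
chosen subset of `d'` of the `d` columns of `X`, where every column of `X` is
`ℓ2`-normalized and `X'ᵀX'` is invertible. Then for every positive
`α ≤ 2/(d+1)`, the series `α • ∑_{i=0}^{∞} (I - α X'ᵀX')^i` converges to
`(X'ᵀX')⁻¹`. -/
theorem submatrix_gram_inverse_neumann_series (N d d' : ℕ) (X : Matrix (Fin N) (Fin d) ℝ)
    (hcol : ∀ j : Fin d, ∑ i : Fin N, (X i j) ^ 2 = 1)
    (f : Fin d' → Fin d) (hf : Function.Injective f)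
    (X' : Matrix (Fin N) (Fin d') ℝ) (hX' : X' = X.submatrix id f)
    (hinv : IsUnit (X'ᵀ * X'))
    (α : ℝ) (hα : 0 < α) (hα' : α ≤ 2 / ((d : ℝ) + 1)) :
    Tendsto
      (fun n : ℕ =>
        α • ∑ i ∈ Finset.range (n + 1), ((1 : Matrix (Fin d') (Fin d') ℝ) - α • (X'ᵀ * X')) ^ i)
      atTop (nhds ((X'ᵀ * X')⁻¹)) := by
  set G : Matrix (Fin d') (Fin d') ℝ := X'ᵀ * X' with hG
  have htr : X'ᴴ = X'ᵀ := conjTranspose_eq_transpose_of_trivial X'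
  have hpsd : G.PosSemidef := by rw [hG, ← htr]; exact posSemidef_conjTranspose_mul_self X'
  have hH : G.IsHermitian := hpsd.1
  have hdet : IsUnit G.det := (isUnit_iff_isUnit_det G).mp hinv
  set lam : Fin d' → ℝ := hH.eigenvalues with hlam
  -- positivity of eigenvalues
  have hnn : ∀ i, 0 ≤ lam i := fun i => hpsd.eigenvalues_nonneg i
  have hne : ∀ i, lam i ≠ 0 := by
    intro i hi
    have hd := hH.det_eq_prod_eigenvalues
    rw [Finset.prod_eq_zero (Finset.mem_univ i) (by simp [← hlam, hi])] at hd
    exact hdet.ne_zero (by simpa using hd)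
  have hpos : ∀ i, 0 < lam i := fun i => (hnn i).lt_of_ne' (hne i)
  -- upper bound on eigenvalues
  have hub : ∀ i, lam i ≤ (d' : ℝ) := by
    intro i
    have heq := hH.eigenvalues_eq i
    set v : Fin d' → ℝ := ⇑(hH.eigenvectorBasis i) with hv
    have hnorm : ∑ j, v j ^ 2 = 1 := by
      have h1 : ‖hH.eigenvectorBasis i‖ = 1 := hH.eigenvectorBasis.orthonormal.1 i
      rw [EuclideanSpace.norm_eq] at h1
      have := congrArg (· ^ 2) h1
      simpa [Real.sq_sqrt (Finset.sum_nonneg fun j _ => sq_nonneg _), sq_abs] using this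
    have hdot : v ⬝ᵥ (G *ᵥ v) = (X' *ᵥ v) ⬝ᵥ (X' *ᵥ v) := by
      rw [hG, ← mulVec_mulVec, dotProduct_mulVec]
      simp [vecMul_transpose]
    have hXsum : ∑ a : Fin N, ∑ j : Fin d', (X' a j) ^ 2 = (d' : ℝ) := by
      rw [Finset.sum_comm]
      have : ∀ j : Fin d', ∑ a : Fin N, (X' a j) ^ 2 = 1 := by
        intro j; rw [hX']; simpa using hcol (f j)
      simp [this]
    have hCS : (X' *ᵥ v) ⬝ᵥ (X' *ᵥ v) ≤ (d' : ℝ) := by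
      rw [← hXsum]
      unfold dotProduct Matrix.mulVec
      calc ∑ a : Fin N, (∑ j, X' a j * v j) * (∑ j, X' a j * v j)
          ≤ ∑ a : Fin N, (∑ j, (X' a j) ^ 2) * (∑ j, (v j) ^ 2) := by
            refine Finset.sum_le_sum fun a _ => ?_
            have := Finset.sum_mul_sq_le_sq_mul_sq Finset.univ (fun j => X' a j) v
            simpa [sq] using this
        _ = ∑ a : Fin N, ∑ j, (X' a j) ^ 2 := by simp [hnorm]
    rw [hlam, heq]
    simpa [hdot] using hCS
  have hd'd : (d' : ℝ) ≤ (d : ℝ) := by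
    have : d' ≤ d := by simpa using Fintype.card_le_of_injective f hf
    exact_mod_cast this
  -- eigenvalues of B
  set μ : Fin d' → ℝ := fun i => 1 - α * lam i with hμdef
  have hμ : ∀ i, |μ i| < 1 := by
    intro i
    have h1 : α * ((d : ℝ) + 1) ≤ 2 := by
      rw [le_div_iff₀ (by positivity)] at hα'
      linarith [hα']
    have h2 : 0 < α * lam i := mul_pos hα (hpos i)
    have h3 : α * lam i < 2 := by
      have e1 : α * lam i ≤ α * (d' : ℝ) := mul_le_mul_of_nonneg_left (hub i) hα.le
      have e2 : α * (d' : ℝ) ≤ α * (d : ℝ) := mul_le_mul_of_nonneg_left hd'd hα.le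
      have e3 : α * ((d : ℝ) + 1) = α * d + α := by ring
      linarith
    rw [abs_lt]
    constructor
    · show -1 < 1 - α * lam i
      linarith
    · show 1 - α * lam i < 1
      linarith
  -- spectral decomposition of B
  set U : Matrix (Fin d') (Fin d') ℝ := (IsHermitian.eigenvectorUnitary hH : Matrix (Fin d') (Fin d') ℝ) with hUdef
  have hU1 : U * star U = 1 := Matrix.mem_unitaryGroup_iff.mp (IsHermitian.eigenvectorUnitary hH).2
  have hU2 : star U * U = 1 := Matrix.mem_unitaryGroup_iff'.mp (IsHermitian.eigenvectorUnitary hH).2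
  have hofReal : (RCLike.ofReal ∘ lam : Fin d' → ℝ) = lam := by funext i; simp
  have hspec : G = U * Matrix.diagonal lam * star U := by
    have := hH.spectral_theorem
    rwa [hofReal] at this
  set B : Matrix (Fin d') (Fin d') ℝ := 1 - α • G with hBdef
  have hB : B = U * Matrix.diagonal μ * star U := by
    have hdiag : Matrix.diagonal μ = 1 - α • Matrix.diagonal lam := by
      rw [← Matrix.diagonal_one, ← Matrix.diagonal_smul, ← Matrix.diagonal_sub]
      congr 1
    rw [hBdef, hspec, hdiag, Matrix.mul_sub, Matrix.sub_mul, Matrix.mul_one, hU1]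
    rw [Matrix.mul_smul, Matrix.smul_mul]
  have hBpow : Tendsto (fun n : ℕ => B ^ (n + 1)) atTop (nhds 0) := by
    rw [hB]
    exact (conj_pow_tendsto_zero U hU2 μ hμ).comp (tendsto_add_atTop_nat 1)
  -- partial sums
  have key : ∀ n : ℕ, α • ∑ i ∈ Finset.range (n + 1), B ^ i
      = G⁻¹ * (1 - B ^ (n + 1)) := by
    intro n
    have hgeom := mul_geom_sum B (n + 1)
    have h1B : (1 : Matrix (Fin d') (Fin d') ℝ) - B = α • G := by
      rw [hBdef]; abel
    have : (1 : Matrix (Fin d') (Fin d') ℝ) - B ^ (n + 1)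
        = (α • G) * ∑ i ∈ Finset.range (n + 1), B ^ i := by
      rw [← h1B]
      have := congrArg Neg.neg hgeom
      rw [neg_sub, ← Matrix.neg_mul, neg_sub] at this
      exact this.symm
    rw [this, Matrix.smul_mul, Matrix.mul_smul, ← Matrix.mul_assoc,
      Matrix.nonsing_inv_mul G hdet, Matrix.one_mul]
  have hfinal : Tendsto (fun n : ℕ => G⁻¹ * (1 - B ^ (n + 1))) atTop (nhds (G⁻¹ * (1 - 0))) :=
    (tendsto_const_nhds.sub hBpow).const_mul G⁻¹
  simp only [sub_zero, Matrix.mul_one] at hfinal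
  simpa only [key] using hfinal
end
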